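/- Let s > 1/2. There is a constant C depending only on s such that ‖f‖_{L^∞(ℝ)} ≤ C ‖f‖_{H^s_𝒟(ℝ)} for each f in the linear span of the Haar functions; i.e., the dyadic Sobolev space H^s_𝒟(ℝ) embeds into L^∞(ℝ) (dyadic Morrey embedding). -/

import Mathlib

open MeasureTheory Filter
open scoped ENNReal Classical Topology

noncomputable section

/-- The standard dyadic interval `[k·2^n, (k+1)·2^n)`. -/
def dyadic (n k : ℤ) : Set ℝ := Set.Ico ((k : ℝ) * 2 ^ n) (((k : ℝ) + 1) * 2 ^ n)

/-- The Haar function associated with `dyadic n k`: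
`h_I = |I|^{-1/2} (1_{I_+} - 1_{I_-})`. -/
def haar (n k : ℤ) : ℝ → ℝ := fun x =>
  (2 : ℝ) ^ (-(n : ℝ) / 2) *
    ((dyadic (n - 1) (2 * k + 1)).indicator 1 x - (dyadic (n - 1) (2 * k)).indicator 1 x)

/-- The constant value of `haar n k` on the dyadic subinterval `dyadic m j`
(its value at the left endpoint of that subinterval). -/
def haarVal (n k m j : ℤ) : ℝ := haar n k ((j : ℝ) * 2 ^ m)

/-- Haar coefficient `(f, h_I)`. -/
def innH (f : ℝ → ℝ) (n k : ℤ) : ℝ := ∫ x, f x * haar n k x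

/-- Dyadic average `⟨f⟩_I = |I|⁻¹ ∫_I f`. -/
def avg (f : ℝ → ℝ) (n k : ℤ) : ℝ := (2 : ℝ) ^ (-n) * ∫ x in dyadic n k, f x

/-- The linear span of the Haar functions. -/
def haarSpan : Submodule ℝ (ℝ → ℝ) :=
  Submodule.span ℝ (Set.range fun p : ℤ × ℤ => haar p.1 p.2)

end

lemma dyadic_meas (n k : ℤ) : MeasurableSet (dyadic n k) := measurableSet_Ico

lemma volume_dyadic (n k : ℤ) : volume (dyadic n k) = ENNReal.ofReal ((2:ℝ)^n) := by
  rw [dyadic, Real.volume_Ico]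
  congr 1
  ring

lemma dyadic_halves (n k : ℤ) :
    dyadic (n-1) (2*k) ∪ dyadic (n-1) (2*k+1) = dyadic n k := by
  have hn : (2:ℝ)^(n:ℤ) = 2^(n-1:ℤ) * 2 := by
    rw [← zpow_add_one₀ (two_ne_zero : (2:ℝ) ≠ 0)]
    congr 1
    ring
  have hp : (0:ℝ) < 2 ^ (n-1 : ℤ) := by positivity
  unfold dyadic
  push_cast
  rw [Set.Ico_union_Ico_eq_Ico (by nlinarith) (by nlinarith), hn]
  congr 1 <;> ring

lemma dyadic_halves_disjoint (n k : ℤ) :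
    Disjoint (dyadic (n-1) (2*k)) (dyadic (n-1) (2*k+1)) := by
  unfold dyadic
  rw [Set.Ico_disjoint_Ico]
  push_cast
  have hp : (0:ℝ) < 2 ^ (n-1 : ℤ) := by positivity
  apply min_le_of_left_le
  apply le_max_of_le_right
  nlinarith

lemma dyadic_subset_or_disjoint {n m k j : ℤ} (h : n ≤ m) :
    dyadic n k ⊆ dyadic m j ∨ Disjoint (dyadic n k) (dyadic m j) := by
  set d : ℤ := 2 ^ (m - n).toNat with hd
  have hdpos : (0:ℤ) < d := by positivity
  have hkey : ((d : ℝ)) * 2 ^ n = 2 ^ m := by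
    have : ((d : ℝ)) = 2 ^ ((m - n).toNat : ℤ) := by
      rw [hd]; push_cast; rw [zpow_natCast]
    rw [this, ← zpow_add₀ (two_ne_zero : (2:ℝ) ≠ 0)]
    congr 1
    omega
  have h2n : (0:ℝ) < 2 ^ (n:ℤ) := by positivity
  rcases le_or_gt (j * d) k with h1 | h1
  · rcases lt_or_ge k ((j+1) * d) with h2 | h2
    · left
      apply Set.Ico_subset_Ico
      · have : ((j:ℝ) * d) * 2 ^ (n:ℤ) ≤ (k:ℝ) * 2 ^ (n:ℤ) := by
          have : ((j * d : ℤ) : ℝ) ≤ (k : ℤ) := by exact_mod_cast h1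
          push_cast at this ⊢
          nlinarith
        calc (j:ℝ) * 2 ^ (m:ℤ) = ((j:ℝ) * d) * 2 ^ (n:ℤ) := by rw [← hkey]; ring
          _ ≤ _ := this
      · have h2' : k + 1 ≤ (j+1) * d := h2
        have : ((k:ℝ) + 1) * 2 ^ (n:ℤ) ≤ (((j:ℝ)+1) * d) * 2 ^ (n:ℤ) := by
          have : ((k + 1 : ℤ) : ℝ) ≤ (((j+1) * d : ℤ) : ℝ) := by exact_mod_cast h2'
          push_cast at this ⊢
          nlinarith
        calc ((k:ℝ) + 1) * 2 ^ (n:ℤ) ≤ (((j:ℝ)+1) * d) * 2 ^ (n:ℤ) := this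
          _ = ((j:ℝ)+1) * 2 ^ (m:ℤ) := by rw [← hkey]; ring
    · right
      rw [dyadic, dyadic, Set.Ico_disjoint_Ico]
      apply min_le_of_right_le
      apply le_max_of_le_left
      have h2r : (((j+1) * d : ℤ) : ℝ) ≤ ((k : ℤ) : ℝ) := by exact_mod_cast h2
      calc ((j:ℝ)+1) * 2 ^ (m:ℤ) = (((j:ℝ)+1) * (d:ℤ)) * 2 ^ (n:ℤ) := by rw [← hkey]; ring
        _ ≤ (k:ℝ) * 2 ^ (n:ℤ) := by
            apply mul_le_mul_of_nonneg_right _ h2n.le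
            push_cast at h2r ⊢
            linarith
  · right
    rw [dyadic, dyadic, Set.Ico_disjoint_Ico]
    apply min_le_of_left_le
    apply le_max_of_le_right
    have h1' : k + 1 ≤ j * d := h1
    have h1r : ((k + 1 : ℤ) : ℝ) ≤ ((j * d : ℤ) : ℝ) := by exact_mod_cast h1'
    calc ((k:ℝ)+1) * 2 ^ (n:ℤ) ≤ ((j:ℝ) * (d:ℤ)) * 2 ^ (n:ℤ) := by
          apply mul_le_mul_of_nonneg_right _ h2n.le
          push_cast at h1r ⊢
          linarith
      _ = (j:ℝ) * 2 ^ (m:ℤ) := by rw [← hkey]; ring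

lemma dyadic_disjoint_same {n k j : ℤ} (h : k ≠ j) :
    Disjoint (dyadic n k) (dyadic n j) := by
  rw [dyadic, dyadic, Set.Ico_disjoint_Ico]
  have h2n : (0:ℝ) < 2 ^ (n:ℤ) := by positivity
  rcases lt_or_gt_of_ne h with hkj | hkj
  · apply min_le_of_left_le
    apply le_max_of_le_right
    have : ((k:ℝ) + 1) ≤ (j:ℝ) := by exact_mod_cast hkj
    nlinarith
  · apply min_le_of_right_le
    apply le_max_of_le_left
    have : ((j:ℝ) + 1) ≤ (k:ℝ) := by exact_mod_cast hkj
    nlinarith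

lemma half1_subset (n k : ℤ) : dyadic (n-1) (2*k+1) ⊆ dyadic n k := by
  rw [← dyadic_halves n k]; exact Set.subset_union_right

lemma half0_subset (n k : ℤ) : dyadic (n-1) (2*k) ⊆ dyadic n k := by
  rw [← dyadic_halves n k]; exact Set.subset_union_left

lemma haar_eq_zero {n k : ℤ} {x : ℝ} (hx : x ∉ dyadic n k) : haar n k x = 0 := by
  unfold haar
  rw [Set.indicator_of_notMem (fun h => hx (half1_subset n k h)),
    Set.indicator_of_notMem (fun h => hx (half0_subset n k h))]
  ring

lemma haar_pos_half {n k : ℤ} {x : ℝ} (hx : x ∈ dyadic (n-1) (2*k+1)) :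
    haar n k x = (2:ℝ) ^ (-(n:ℝ)/2) := by
  have h0 : x ∉ dyadic (n-1) (2*k) :=
    Set.disjoint_right.mp (dyadic_halves_disjoint n k) hx
  unfold haar
  rw [Set.indicator_of_mem hx, Set.indicator_of_notMem h0]
  simp

lemma haar_neg_half {n k : ℤ} {x : ℝ} (hx : x ∈ dyadic (n-1) (2*k)) :
    haar n k x = -((2:ℝ) ^ (-(n:ℝ)/2)) := by
  have h1 : x ∉ dyadic (n-1) (2*k+1) :=
    Set.disjoint_left.mp (dyadic_halves_disjoint n k) hx
  unfold haar
  rw [Set.indicator_of_mem hx, Set.indicator_of_notMem h1]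
  simp


lemma haar_abs_le (n k : ℤ) (x : ℝ) : |haar n k x| ≤ (2:ℝ) ^ (-(n:ℝ)/2) := by
  have h2 : (0:ℝ) < (2:ℝ) ^ (-(n:ℝ)/2) := Real.rpow_pos_of_pos two_pos _
  by_cases h1 : x ∈ dyadic (n-1) (2*k+1)
  · rw [haar_pos_half h1, abs_of_pos h2]
  · by_cases h0 : x ∈ dyadic (n-1) (2*k)
    · rw [haar_neg_half h0, abs_neg, abs_of_pos h2]
    · have hx : x ∉ dyadic n k := by
        rw [← dyadic_halves n k]
        simp [h0, h1]
      rw [haar_eq_zero hx, abs_zero]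
      exact h2.le

lemma haar_measurable (n k : ℤ) : Measurable (haar n k) := by
  apply Measurable.const_mul
  exact ((measurable_const.indicator (dyadic_meas _ _)).sub
    (measurable_const.indicator (dyadic_meas _ _)))

lemma indicator_integrable (n k : ℤ) :
    Integrable ((dyadic n k).indicator (1 : ℝ → ℝ)) := by
  rw [integrable_indicator_iff (dyadic_meas n k)]
  apply (integrableOn_const_iff (C := (1:ℝ))).mpr
  right
  rw [volume_dyadic]
  exact ENNReal.ofReal_lt_top

lemma haar_integrable (n k : ℤ) : Integrable (haar n k) := by
  unfold haar
  exact (((indicator_integrable _ _).sub (indicator_integrable _ _)).const_mul _)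

lemma integral_haar (n k : ℤ) : ∫ x, haar n k x = 0 := by
  unfold haar
  rw [MeasureTheory.integral_const_mul, integral_sub (indicator_integrable _ _)
    (indicator_integrable _ _), MeasureTheory.integral_indicator_one (dyadic_meas _ _),
    MeasureTheory.integral_indicator_one (dyadic_meas _ _), measureReal_def, measureReal_def,
    volume_dyadic, volume_dyadic]
  simp

lemma haar_mul_integrable (n k m j : ℤ) :
    Integrable (fun x => haar n k x * haar m j x) := by
  apply Integrable.mono' (g := fun x =>
      ((2:ℝ) ^ (-(n:ℝ)/2) * (2:ℝ) ^ (-(m:ℝ)/2)) * (dyadic n k).indicator 1 x)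
    (((indicator_integrable n k).const_mul _))
    (((haar_measurable n k).mul (haar_measurable m j)).aestronglyMeasurable)
  filter_upwards with x
  rw [Real.norm_eq_abs, Pi.mul_apply, abs_mul]
  by_cases hx : x ∈ dyadic n k
  · rw [Set.indicator_of_mem hx]
    simp only [Pi.one_apply, mul_one]
    exact mul_le_mul (haar_abs_le n k x) (haar_abs_le m j x) (abs_nonneg _)
      (Real.rpow_pos_of_pos two_pos _).le
  · rw [Set.indicator_of_notMem hx, haar_eq_zero hx]
    simp

lemma integral_haar_sq (n k : ℤ) : ∫ x, haar n k x * haar n k x = 1 := by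
  have hpt : ∀ x, haar n k x * haar n k x =
      (2:ℝ) ^ (-(n:ℝ)) * ((dyadic (n-1) (2*k+1)).indicator 1 x
        + (dyadic (n-1) (2*k)).indicator 1 x) := by
    intro x
    have h2 : (2:ℝ) ^ (-(n:ℝ)/2) * (2:ℝ) ^ (-(n:ℝ)/2) = (2:ℝ) ^ (-(n:ℝ)) := by
      rw [← Real.rpow_add two_pos]
      ring_nf
    by_cases h1 : x ∈ dyadic (n-1) (2*k+1)
    · have h0 : x ∉ dyadic (n-1) (2*k) :=
        Set.disjoint_right.mp (dyadic_halves_disjoint n k) h1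
      rw [haar_pos_half h1, Set.indicator_of_mem h1, Set.indicator_of_notMem h0, h2]
      simp
    · by_cases h0 : x ∈ dyadic (n-1) (2*k)
      · rw [haar_neg_half h0, Set.indicator_of_mem h0, Set.indicator_of_notMem h1]
        simp only [Pi.one_apply, add_zero, zero_add, mul_one]
        linear_combination h2
      · have hx : x ∉ dyadic n k := by
          rw [← dyadic_halves n k]
          simp [h0, h1]
        rw [haar_eq_zero hx, Set.indicator_of_notMem h1, Set.indicator_of_notMem h0]
        ring
    
  rw [show (fun x => haar n k x * haar n k x) = (fun x => (2:ℝ) ^ (-(n:ℝ)) *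
      ((dyadic (n-1) (2*k+1)).indicator 1 x + (dyadic (n-1) (2*k)).indicator 1 x))
    from funext hpt]
  rw [MeasureTheory.integral_const_mul, integral_add (indicator_integrable _ _)
    (indicator_integrable _ _), MeasureTheory.integral_indicator_one (dyadic_meas _ _),
    MeasureTheory.integral_indicator_one (dyadic_meas _ _), measureReal_def, measureReal_def,
    volume_dyadic, volume_dyadic]
  have hp : (0:ℝ) < 2 ^ (n-1 : ℤ) := by positivity
  rw [ENNReal.toReal_ofReal hp.le]
  have : (2:ℝ) ^ (-(n:ℝ)) = ((2:ℝ) ^ (n:ℤ))⁻¹ := by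
    rw [← Real.rpow_intCast (2:ℝ) n, ← Real.rpow_neg two_pos.le]
  rw [this]
  have h2 : (2:ℝ) ^ (n:ℤ) = 2 ^ (n-1:ℤ) * 2 := by
    rw [← zpow_add_one₀ (two_ne_zero : (2:ℝ) ≠ 0)]
    congr 1
    ring
  field_simp [h2]
  ring_nf
  rw [← zpow_add_one₀ two_ne_zero]
  ring_nf

lemma haar_ortho_lt {n k m j : ℤ} (hnm : n < m) : ∫ x, haar n k x * haar m j x = 0 := by
  have hle : n ≤ m - 1 := by omega
  rcases dyadic_subset_or_disjoint (k := k) (j := 2*j+1) hle with hsub1 | hdis1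
  · have hpt : (fun x => haar n k x * haar m j x)
        = fun x => haar n k x * (2:ℝ) ^ (-(m:ℝ)/2) := by
      funext x
      by_cases hx : x ∈ dyadic n k
      · rw [haar_pos_half (hsub1 hx)]
      · rw [haar_eq_zero hx, zero_mul, zero_mul]
    rw [hpt, MeasureTheory.integral_mul_const, integral_haar, zero_mul]
  · rcases dyadic_subset_or_disjoint (k := k) (j := 2*j) hle with hsub0 | hdis0
    · have hpt : (fun x => haar n k x * haar m j x)
          = fun x => haar n k x * (-((2:ℝ) ^ (-(m:ℝ)/2))) := by
        funext x
        by_cases hx : x ∈ dyadic n k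
        · rw [haar_neg_half (hsub0 hx)]
        · rw [haar_eq_zero hx, zero_mul, zero_mul]
      rw [hpt, MeasureTheory.integral_mul_const, integral_haar, zero_mul]
    · have hpt : (fun x => haar n k x * haar m j x) = fun _ => (0:ℝ) := by
        funext x
        by_cases hx : x ∈ dyadic n k
        · have hx1 : x ∉ dyadic (m-1) (2*j+1) := Set.disjoint_left.mp hdis1 hx
          have hx0 : x ∉ dyadic (m-1) (2*j) := Set.disjoint_left.mp hdis0 hx
          have hxm : x ∉ dyadic m j := by
            rw [← dyadic_halves m j]
            simp [hx0, hx1]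
          rw [haar_eq_zero hxm, mul_zero]
        · rw [haar_eq_zero hx, zero_mul]
      rw [hpt, integral_zero]

lemma haar_inner (n k m j : ℤ) :
    ∫ x, haar n k x * haar m j x = if (n,k) = (m,j) then 1 else 0 := by
  by_cases h : (n,k) = (m,j)
  · rw [if_pos h]
    obtain ⟨h1, h2⟩ := Prod.mk.injEq .. ▸ h
    subst h1; subst h2
    exact integral_haar_sq n k
  · rw [if_neg h]
    rcases lt_trichotomy n m with hnm | hnm | hnm
    · exact haar_ortho_lt hnm
    · subst hnm
      have hkj : k ≠ j := fun hkj => h (by rw [hkj])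
      have hpt : (fun x => haar n k x * haar n j x) = fun _ => (0:ℝ) := by
        funext x
        by_cases hx : x ∈ dyadic n k
        · have : x ∉ dyadic n j := Set.disjoint_left.mp (dyadic_disjoint_same hkj) hx
          rw [haar_eq_zero this, mul_zero]
        · rw [haar_eq_zero hx, zero_mul]
      rw [hpt, integral_zero]
    · have : (fun x => haar n k x * haar m j x) = fun x => haar m j x * haar n k x := by
        funext x; ring
      rw [this]
      exact haar_ortho_lt hnm

noncomputable def repFun (c : (ℤ × ℤ) →₀ ℝ) : ℝ → ℝ :=
  fun x => ∑ p ∈ c.support, c p * haar p.1 p.2 x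

lemma rep_apply (c : (ℤ × ℤ) →₀ ℝ) :
    (c.sum fun p a => a • haar p.1 p.2) = repFun c := by
  funext x
  rw [Finsupp.sum, repFun]
  rw [Finset.sum_apply]
  simp [smul_eq_mul]

lemma repFun_mul_haar (c : (ℤ × ℤ) →₀ ℝ) (n k : ℤ) :
    (fun x => repFun c x * haar n k x)
      = fun x => ∑ p ∈ c.support, c p * (haar p.1 p.2 x * haar n k x) := by
  funext x
  rw [repFun, Finset.sum_mul]
  exact Finset.sum_congr rfl fun p _ => by ring

lemma repFun_mul_haar_integrable (c : (ℤ × ℤ) →₀ ℝ) (n k : ℤ) :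
    Integrable (fun x => repFun c x * haar n k x) := by
  rw [repFun_mul_haar]
  exact integrable_finset_sum _ fun p _ => (haar_mul_integrable p.1 p.2 n k).const_mul _

lemma innH_repFun (c : (ℤ × ℤ) →₀ ℝ) (n k : ℤ) : innH (repFun c) n k = c (n, k) := by
  rw [innH, repFun_mul_haar, MeasureTheory.integral_finset_sum _
    (fun p _ => (haar_mul_integrable p.1 p.2 n k).const_mul _)]
  have : ∀ p ∈ c.support,
      ∫ x, c p * (haar p.1 p.2 x * haar n k x) = if p = (n,k) then c p else 0 := by
    intro p _
    rw [MeasureTheory.integral_const_mul, haar_inner]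
    by_cases h : p = (n,k)
    · rw [if_pos, if_pos h, mul_one]
      rw [← h]
    · rw [if_neg, if_neg h, mul_zero]
      rw [show p = (p.1, p.2) from rfl] at h
      exact h
  rw [Finset.sum_congr rfl this, Finset.sum_ite_eq' c.support (n,k) (fun p => c p)]
  by_cases hm : (n,k) ∈ c.support
  · rw [if_pos hm]
  · rw [if_neg hm]
    exact (Finsupp.notMem_support_iff.mp hm).symm

lemma int_sq_repFun (c : (ℤ × ℤ) →₀ ℝ) :
    ∫ x, (repFun c x) ^ 2 = ∑ p ∈ c.support, (c p) ^ 2 := by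
  have hpt : (fun x => (repFun c x) ^ 2)
      = fun x => ∑ p ∈ c.support, c p * (repFun c x * haar p.1 p.2 x) := by
    funext x
    rw [sq]
    calc repFun c x * repFun c x
        = (∑ p ∈ c.support, c p * haar p.1 p.2 x) * repFun c x := rfl
      _ = ∑ p ∈ c.support, c p * haar p.1 p.2 x * repFun c x := Finset.sum_mul _ _ _
      _ = ∑ p ∈ c.support, c p * (repFun c x * haar p.1 p.2 x) :=
          Finset.sum_congr rfl fun p _ => by ring
  rw [hpt, MeasureTheory.integral_finset_sum _
    (fun p _ => (repFun_mul_haar_integrable c p.1 p.2).const_mul _)]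
  refine Finset.sum_congr rfl fun p _ => ?_
  rw [MeasureTheory.integral_const_mul]
  have : ∫ x, repFun c x * haar p.1 p.2 x = c p := by
    have := innH_repFun c p.1 p.2
    rw [innH] at this
    rw [this]
  rw [this, sq]

lemma le_of_sq_le_sq' {a b : ℝ} (ha : 0 ≤ a) (hb : 0 ≤ b) (h : a^2 ≤ b^2) : a ≤ b := by
  nlinarith [sq_nonneg (a - b), sq_nonneg (a + b)]

lemma haarSummable {t : ℝ} (ht : 0 < t) :
    Summable (fun n : ℤ => ((2:ℝ) ^ (-t)) ^ n.natAbs) := by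
  have hr0 : (0:ℝ) ≤ (2:ℝ) ^ (-t) := (Real.rpow_pos_of_pos two_pos _).le
  have hr1 : (2:ℝ) ^ (-t) < 1 :=
    Real.rpow_lt_one_of_one_lt_of_neg one_lt_two (by linarith)
  apply Summable.of_nat_of_neg
  · simpa using summable_geometric_of_lt_one hr0 hr1
  · simpa using summable_geometric_of_lt_one hr0 hr1

set_option maxHeartbeats 1000000 in
theorem dyadic_Morrey_embedding_aux (s : ℝ) (hs : 1 / 2 < s) :
    ∃ C > 0, ∀ c : (ℤ × ℤ) →₀ ℝ,
      ∀ x, |repFun c x| ≤ C * Real.sqrt ((∫ x, repFun c x ^ 2) +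
        ∑' p : ℤ × ℤ, (2 : ℝ) ^ (-2 * s * (p.1 : ℝ)) * innH (repFun c) p.1 p.2 ^ 2) := by
  set t : ℝ := min (1/2) (s - 1/2) with htdef
  have ht : 0 < t := lt_min (by norm_num) (by linarith)
  have hsum := haarSummable ht
  set r : ℝ := (2:ℝ) ^ (-t) with hrdef
  have hr0 : (0:ℝ) < r := Real.rpow_pos_of_pos two_pos _
  set M : ℝ := ∑' n : ℤ, r ^ n.natAbs with hMdef
  have hM1 : (1:ℝ) ≤ M := by
    have := Summable.le_tsum hsum 0 (fun n _ => pow_nonneg hr0.le _)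
    simpa using this
  refine ⟨Real.sqrt 2 * M,
    mul_pos (Real.sqrt_pos.mpr two_pos) (lt_of_lt_of_le one_pos hM1), fun c x => ?_⟩
  -- abbreviations
  set A : ℝ := ∑ p ∈ c.support, (c p)^2 with hAdef
  have hA0 : 0 ≤ A := Finset.sum_nonneg fun p _ => sq_nonneg _
  set B : ℝ := ∑ p ∈ c.support, (2:ℝ) ^ (-2*s*(p.1:ℝ)) * (c p)^2 with hBdef
  have hB0 : 0 ≤ B := Finset.sum_nonneg fun p _ =>
    mul_nonneg (Real.rpow_pos_of_pos two_pos _).le (sq_nonneg _)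
  have hIntSq : ∫ x, repFun c x ^ 2 = A := int_sq_repFun c
  have hTsum : (∑' p : ℤ × ℤ, (2 : ℝ) ^ (-2 * s * (p.1 : ℝ)) * innH (repFun c) p.1 p.2 ^ 2)
      = B := by
    rw [tsum_eq_sum (s := c.support) (fun p hp => by
      rw [innH_repFun, Prod.mk.eta, Finsupp.notMem_support_iff.mp hp]
      ring)]
    exact Finset.sum_congr rfl fun p _ => by rw [innH_repFun, Prod.mk.eta]
  rw [hIntSq, hTsum]
  set D : ℝ := Real.sqrt A + Real.sqrt B with hDdef
  have hD0 : 0 ≤ D := by positivity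
  -- the filtered sum
  set T : Finset (ℤ × ℤ) := c.support.filter (fun p => x ∈ dyadic p.1 p.2) with hTdef
  have habs : |repFun c x| ≤ ∑ p ∈ T, |c p * haar p.1 p.2 x| := by
    rw [repFun]
    refine le_trans (Finset.abs_sum_le_sum_abs _ _) (le_of_eq ?_)
    refine (Finset.sum_subset (Finset.filter_subset _ _) ?_).symm
    intro p hp hpT
    have hx : x ∉ dyadic p.1 p.2 := by
      by_contra hx
      exact hpT (Finset.mem_filter.mpr ⟨hp, hx⟩)
    rw [haar_eq_zero hx, mul_zero, abs_zero]
  -- per-term bound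
  have hterm : ∀ p ∈ T, |c p * haar p.1 p.2 x| ≤ D * r ^ p.1.natAbs := by
    intro p hpT
    obtain ⟨hpS, _⟩ := Finset.mem_filter.mp hpT
    set n : ℤ := p.1 with hn
    have hhb : |haar p.1 p.2 x| ≤ (2:ℝ) ^ (-(n:ℝ)/2) := haar_abs_le _ _ _
    have step1 : |c p * haar p.1 p.2 x| ≤ |c p| * (2:ℝ) ^ (-(n:ℝ)/2) := by
      rw [abs_mul]
      exact mul_le_mul_of_nonneg_left hhb (abs_nonneg _)
    rcases le_or_gt n 0 with hn0 | hn0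
    · -- use B
      have hB1 : (2:ℝ) ^ (-2*s*(n:ℝ)) * (c p)^2 ≤ B :=
        Finset.single_le_sum (f := fun p : ℤ × ℤ => (2:ℝ) ^ (-2*s*(p.1:ℝ)) * (c p)^2)
          (fun q _ => mul_nonneg (Real.rpow_pos_of_pos two_pos _).le (sq_nonneg _)) hpS
      have key : |c p| * (2:ℝ) ^ (-(n:ℝ)/2) ≤ Real.sqrt B * (2:ℝ) ^ ((s - 1/2) * (n:ℝ)) := by
        apply le_of_sq_le_sq' (by positivity) (by positivity)
        have e1 : (|c p| * (2:ℝ) ^ (-(n:ℝ)/2))^2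
            = ((2:ℝ) ^ (-2*s*(n:ℝ)) * (c p)^2) * (2:ℝ) ^ ((2*s - 1) * (n:ℝ)) := by
          rw [mul_pow, sq_abs, ← Real.rpow_natCast ((2:ℝ) ^ (-(n:ℝ)/2)) 2,
            ← Real.rpow_mul two_pos.le]
          have he : (-(n:ℝ)/2 * ((2:ℕ):ℝ)) = (-2*s*(n:ℝ)) + ((2*s-1)*(n:ℝ)) := by
            push_cast; ring
          rw [he, Real.rpow_add two_pos]
          ring
        have e2 : (Real.sqrt B * (2:ℝ) ^ ((s - 1/2) * (n:ℝ)))^2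
            = B * (2:ℝ) ^ ((2*s - 1) * (n:ℝ)) := by
          rw [mul_pow, Real.sq_sqrt hB0, ← Real.rpow_natCast ((2:ℝ) ^ ((s-1/2)*(n:ℝ))) 2,
            ← Real.rpow_mul two_pos.le]
          ring_nf
        rw [e1, e2]
        exact mul_le_mul_of_nonneg_right hB1 (Real.rpow_pos_of_pos two_pos _).le
      have expbd : (2:ℝ) ^ ((s - 1/2) * (n:ℝ)) ≤ r ^ n.natAbs := by
        have hnabs : ((n.natAbs : ℕ) : ℝ) = -(n:ℝ) := by
          rw [Nat.cast_natAbs, abs_of_nonpos hn0]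
          push_cast
          ring
        have : r ^ n.natAbs = (2:ℝ) ^ (t * (n:ℝ)) := by
          rw [hrdef, ← Real.rpow_natCast ((2:ℝ)^(-t)) n.natAbs, ← Real.rpow_mul two_pos.le,
            hnabs]
          ring_nf
        rw [this]
        apply Real.rpow_le_rpow_left_iff one_lt_two |>.mpr
        have ht2 : t ≤ s - 1/2 := min_le_right _ _
        nlinarith
      calc |c p * haar p.1 p.2 x| ≤ |c p| * (2:ℝ) ^ (-(n:ℝ)/2) := step1
        _ ≤ Real.sqrt B * (2:ℝ) ^ ((s - 1/2) * (n:ℝ)) := key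
        _ ≤ Real.sqrt B * r ^ n.natAbs :=
            mul_le_mul_of_nonneg_left expbd (Real.sqrt_nonneg _)
        _ ≤ D * r ^ n.natAbs := by
            apply mul_le_mul_of_nonneg_right _ (pow_nonneg hr0.le _)
            rw [hDdef]
            nlinarith [Real.sqrt_nonneg A]
    · -- use A
      have hA1 : (c p)^2 ≤ A :=
        Finset.single_le_sum (f := fun p : ℤ × ℤ => (c p)^2)
          (fun q _ => sq_nonneg _) hpS
      have hcA : |c p| ≤ Real.sqrt A := by
        apply le_of_sq_le_sq' (abs_nonneg _) (Real.sqrt_nonneg _)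
        rw [Real.sq_sqrt hA0, sq_abs]
        exact hA1
      have expbd : (2:ℝ) ^ (-(n:ℝ)/2) ≤ r ^ n.natAbs := by
        have hnabs : ((n.natAbs : ℕ) : ℝ) = (n:ℝ) := by
          rw [Nat.cast_natAbs, abs_of_nonneg hn0.le]
        have : r ^ n.natAbs = (2:ℝ) ^ (-t * (n:ℝ)) := by
          rw [hrdef, ← Real.rpow_natCast ((2:ℝ)^(-t)) n.natAbs, ← Real.rpow_mul two_pos.le,
            hnabs]
        rw [this]
        apply Real.rpow_le_rpow_left_iff one_lt_two |>.mpr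
        have ht1 : t ≤ 1/2 := min_le_left _ _
        have hn1 : (1:ℝ) ≤ (n:ℝ) := by exact_mod_cast hn0
        nlinarith
      calc |c p * haar p.1 p.2 x| ≤ |c p| * (2:ℝ) ^ (-(n:ℝ)/2) := step1
        _ ≤ Real.sqrt A * r ^ n.natAbs := by
            apply mul_le_mul hcA expbd (Real.rpow_pos_of_pos two_pos _).le
              (Real.sqrt_nonneg _)
        _ ≤ D * r ^ n.natAbs := by
            apply mul_le_mul_of_nonneg_right _ (pow_nonneg hr0.le _)
            rw [hDdef]
            nlinarith [Real.sqrt_nonneg B]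
  clear_value A B D M
  -- sum the per-term bounds, collapse to levels
  have hlevels : ∑ p ∈ T, D * r ^ p.1.natAbs
      = D * ∑ n ∈ T.image Prod.fst, r ^ n.natAbs := by
    rw [Finset.mul_sum, Finset.sum_image]
    intro p hp q hq hpq
    obtain ⟨_, hxp⟩ := Finset.mem_filter.mp hp
    obtain ⟨_, hxq⟩ := Finset.mem_filter.mp hq
    have : p.2 = q.2 := by
      by_contra hne
      have hd := dyadic_disjoint_same (n := q.1) (k := p.2) (j := q.2) hne
      rw [hpq] at hxp
      exact (Set.disjoint_left.mp hd hxp) hxq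
    exact Prod.ext hpq this
  have hgeo : ∑ n ∈ T.image Prod.fst, r ^ n.natAbs ≤ M := by
    rw [hMdef]
    exact Summable.sum_le_tsum _ (fun n _ => pow_nonneg hr0.le _) hsum
  have hDM : |repFun c x| ≤ D * M := by
    calc |repFun c x| ≤ ∑ p ∈ T, |c p * haar p.1 p.2 x| := habs
      _ ≤ ∑ p ∈ T, D * r ^ p.1.natAbs := Finset.sum_le_sum hterm
      _ = D * ∑ n ∈ T.image Prod.fst, r ^ n.natAbs := hlevels
      _ ≤ D * M := mul_le_mul_of_nonneg_left hgeo hD0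
  have hD2 : D ≤ Real.sqrt 2 * Real.sqrt (A + B) := by
    apply le_of_sq_le_sq' hD0 (by positivity)
    rw [hDdef, mul_pow, Real.sq_sqrt (by norm_num : (0:ℝ) ≤ 2),
      Real.sq_sqrt (by linarith : (0:ℝ) ≤ A + B)]
    nlinarith [Real.sq_sqrt hA0, Real.sq_sqrt hB0, sq_nonneg (Real.sqrt A - Real.sqrt B),
      Real.sqrt_nonneg A, Real.sqrt_nonneg B]
  calc |repFun c x| ≤ D * M := hDM
    _ ≤ (Real.sqrt 2 * Real.sqrt (A + B)) * M := by
        apply mul_le_mul_of_nonneg_right hD2 (by linarith)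
    _ = Real.sqrt 2 * M * Real.sqrt (A + B) := by ring

theorem dyadic_Morrey_embedding (s : ℝ) (hs : 1 / 2 < s) :
    ∃ C > 0, ∀ f ∈ haarSpan,
      eLpNorm f ⊤ volume ≤ ENNReal.ofReal (C * Real.sqrt ((∫ x, f x ^ 2) +
        ∑' p : ℤ × ℤ, (2 : ℝ) ^ (-2 * s * (p.1 : ℝ)) * innH f p.1 p.2 ^ 2)) := by
  obtain ⟨C, hC, hbound⟩ := dyadic_Morrey_embedding_aux s hs
  refine ⟨C, hC, fun f hf => ?_⟩
  obtain ⟨c, hc⟩ := Finsupp.mem_span_range_iff_exists_finsupp.mp hf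
  have hfc : f = repFun c := by rw [← hc, rep_apply]
  subst hfc
  rw [eLpNorm_exponent_top]
  apply eLpNormEssSup_le_of_ae_bound
  filter_upwards with x
  rw [Real.norm_eq_abs]
  exact hbound c x
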